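/- Let d ≥ 2 be an integer and let p_d denote the unique solution p ∈ (0, 1/4] of the equation ((1 + √(1 − 4p))/2)^d = p. Suppose X = (X_v)_{v∈V} is a 1-dependent proper q-coloring of the d-ray star graph S^d such that all the random variables X_v have the same distribution. Then q ≥ 1/p_d. -/
import Mathlib


open MeasureTheory ProbabilityTheory

/-- A process `X` indexed by the vertices of a graph `G` is *1-dependent* if its
restrictions to any two vertex sets at graph distance greater than 1 (i.e. containing
no common and no adjacent vertices) are independent. -/
def OneDependent {V E Ω : Type*} [MeasurableSpace E] (G : SimpleGraph V)
    [MeasurableSpace Ω] (μ : Measure Ω) (X : V → Ω → E) : Prop :=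
  ∀ A B : Set V, (∀ a ∈ A, ∀ b ∈ B, a ≠ b ∧ ¬G.Adj a b) →
    IndepFun (fun ω (a : A) => X a.1 ω) (fun ω (b : B) => X b.1 ω) μ

/-- A `{0,1}`-valued process is a *hard-core process* on `G` if almost surely no two
adjacent vertices both take the value `1` (`true`). -/
def HardCore {V Ω : Type*} (G : SimpleGraph V) [MeasurableSpace Ω]
    (μ : Measure Ω) (J : V → Ω → Bool) : Prop :=
  ∀ u v, G.Adj u v → μ {ω | J u ω = true ∧ J v ω = true} = 0

/-- The critical point `p_h(G)`: the supremum of all `p` for which a 1-dependent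
hard-core process on `G` with marginals `P(J_v = 1) = p` exists. -/
noncomputable def pCrit {V : Type*} (G : SimpleGraph V) : ℝ :=
  sSup {p : ℝ | ∃ (Ω : Type) (_ : MeasurableSpace Ω) (μ : Measure Ω),
    IsProbabilityMeasure μ ∧ ∃ J : V → Ω → Bool,
      (∀ v, Measurable (J v)) ∧ HardCore G μ J ∧ OneDependent G μ J ∧
      ∀ v, (μ {ω | J v ω = true}).toReal = p}

/-- The `d`-ray star graph: a distinguished vertex `none`, and `d` infinite rays;
`some (i, k)` is the `(k+1)`-st vertex of ray `i`. -/
def starGraph (d : ℕ) : SimpleGraph (Option (Fin d × ℕ)) :=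
  SimpleGraph.fromRel (fun u v =>
    (∃ i, u = none ∧ v = some (i, 0)) ∨ (∃ i k, u = some (i, k) ∧ v = some (i, k + 1)))

lemma star_adj_root {d : ℕ} (i : Fin d) : (starGraph d).Adj none (some (i, 0)) := by
  rw [starGraph, SimpleGraph.fromRel_adj]
  exact ⟨by simp, Or.inl (Or.inl ⟨i, rfl, rfl⟩)⟩

lemma star_adj_step {d : ℕ} (i : Fin d) (k : ℕ) :
    (starGraph d).Adj (some (i, k)) (some (i, k + 1)) := by
  rw [starGraph, SimpleGraph.fromRel_adj]
  exact ⟨by simp, Or.inl (Or.inr ⟨i, k, rfl, rfl⟩)⟩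

lemma star_not_adj_none {d : ℕ} (i : Fin d) (a : ℕ) (ha : a ≠ 0) :
    ¬ (starGraph d).Adj none (some (i, a)) := by
  rw [starGraph, SimpleGraph.fromRel_adj]
  rintro ⟨-, (⟨j, -, h⟩ | ⟨j, k, h, -⟩) | (⟨j, h, -⟩ | ⟨j, k, -, h⟩)⟩ <;> simp_all

lemma star_not_adj_some {d : ℕ} (i j : Fin d) (a b : ℕ)
    (h : i ≠ j ∨ (a + 1 ≠ b ∧ b + 1 ≠ a)) :
    ¬ (starGraph d).Adj (some (i, a)) (some (j, b)) := by
  rw [starGraph, SimpleGraph.fromRel_adj]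
  rintro ⟨-, (⟨l, h1, -⟩ | ⟨l, k, h1, h2⟩) | (⟨l, h1, -⟩ | ⟨l, k, h1, h2⟩)⟩ <;> simp_all

lemma biInter_eq_preimage {V Ω : Type*} {q : ℕ} (X : V → Ω → Fin q) (S : Finset V)
    (g : V → Set (Fin q)) :
    (⋂ v ∈ S, X v ⁻¹' g v)
      = (fun ω (a : (S : Set V)) => X a.1 ω) ⁻¹' {f | ∀ a : (S : Set V), f a ∈ g a.1} := by
  ext ω
  simp [Set.mem_iInter, Subtype.forall]

lemma meas_forall_mem {α : Type*} {q : ℕ} (s : Set α) [Countable s] (g : α → Set (Fin q)) :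
    MeasurableSet {f : s → Fin q | ∀ a : s, f a ∈ g a.1} := by
  have h : {f : s → Fin q | ∀ a : s, f a ∈ g a.1}
      = ⋂ a : s, (fun f : s → Fin q => f a) ⁻¹' g a.1 := by ext f; simp
  rw [h]
  exact MeasurableSet.iInter fun a => (measurable_pi_apply a) MeasurableSet.of_discrete

lemma key_indep {V Ω : Type*} {q : ℕ} {G : SimpleGraph V} [MeasurableSpace Ω]
    {μ : Measure Ω} {X : V → Ω → Fin q} (hdep : OneDependent G μ X)
    (S T : Finset V) (hsep : ∀ a ∈ S, ∀ b ∈ T, a ≠ b ∧ ¬G.Adj a b)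
    (g h : V → Set (Fin q)) :
    μ ((⋂ v ∈ S, X v ⁻¹' g v) ∩ ⋂ v ∈ T, X v ⁻¹' h v)
      = μ (⋂ v ∈ S, X v ⁻¹' g v) * μ (⋂ v ∈ T, X v ⁻¹' h v) := by
  have hI := hdep (S : Set V) (T : Set V) (fun a ha b hb => hsep a ha b hb)
  have hcS : Countable (S : Set V) := (S.countable_toSet).to_subtype
  have hcT : Countable (T : Set V) := (T.countable_toSet).to_subtype
  rw [biInter_eq_preimage X S g, biInter_eq_preimage X T h]
  exact hI.measure_inter_preimage_eq_mul _ _ (meas_forall_mem _ g) (meas_forall_mem _ h)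

def bseq (p : ℝ) : ℕ → ℝ × ℝ
  | 0 => (1, 1 - p)
  | n+1 => ((bseq p n).2, (bseq p n).2 - p * (bseq p n).1)

lemma bseq_fst_zero (p : ℝ) : (bseq p 0).1 = 1 := rfl

lemma bseq_fst_one (p : ℝ) : (bseq p 1).1 = 1 - p := rfl

lemma bseq_rec (p : ℝ) (m : ℕ) :
    (bseq p (m+2)).1 = (bseq p (m+1)).1 - p * (bseq p m).1 := by
  simp [bseq]

/-- Let `d ≥ 2` and let `p` be the unique solution in `(0, 1/4]` of
`((1 + √(1 - 4p))/2)^d = p`. If `X` is a 1-dependent proper `q`-coloring of the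
`d`-ray star graph whose one-dimensional marginals are all equal, then `q ≥ 1/p`. -/
theorem coloring_lower_bound (d : ℕ) (hd : 2 ≤ d) (p : ℝ)
    (hp : p ∈ Set.Ioc (0 : ℝ) (1 / 4))
    (heq : ((1 + Real.sqrt (1 - 4 * p)) / 2) ^ d = p)
    (q : ℕ) (Ω : Type) [MeasurableSpace Ω] (μ : Measure Ω) [IsProbabilityMeasure μ]
    (X : Option (Fin d × ℕ) → Ω → Fin q) (hmeas : ∀ v, Measurable (X v))
    (hproper : ∀ u v, (starGraph d).Adj u v → μ {ω | X u ω = X v ω} = 0)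
    (hdep : OneDependent (starGraph d) μ X)
    (hid : ∀ u v, Measure.map (X u) μ = Measure.map (X v) μ) :
    (q : ℝ) ≥ 1 / p := by
  obtain ⟨hp0, hp4⟩ := hp
  -- Ω is nonempty and q ≥ 1
  have hne : Nonempty Ω := by
    by_contra h
    rw [not_nonempty_iff] at h
    have h1 : μ Set.univ = 1 := measure_univ
    rw [Set.univ_eq_empty_iff.2 h, measure_empty] at h1
    exact zero_ne_one h1
  have hqpos : 0 < q := by
    obtain ⟨ω⟩ := hne
    exact (X none ω).pos
  have hq0 : (0 : ℝ) < q := by exact_mod_cast hqpos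
  have : Nonempty (Fin q) := ⟨⟨0, hqpos⟩⟩
  -- a color with probability at least 1/q
  have hCmeas : ∀ (v) (c : Fin q), MeasurableSet (X v ⁻¹' {c}) :=
    fun v c => hmeas v (measurableSet_singleton c)
  have hsum1 : ∑ c0 : Fin q, (μ (X none ⁻¹' {c0})).toReal = 1 := by
    have h1 : ∑ c0 ∈ (Finset.univ : Finset (Fin q)), μ (X none ⁻¹' {c0})
        = μ (X none ⁻¹' ((Finset.univ : Finset (Fin q)) : Set (Fin q))) :=
      sum_measure_preimage_singleton _ (fun c0 _ => hCmeas none c0)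
    rw [Finset.coe_univ, Set.preimage_univ, measure_univ] at h1
    rw [← ENNReal.toReal_sum (fun c0 _ => measure_ne_top μ _), h1, ENNReal.toReal_one]
  have hc : ∃ c : Fin q, 1/(q:ℝ) ≤ (μ (X none ⁻¹' {c})).toReal := by
    by_contra hcon
    push_neg at hcon
    have hlt : ∑ c0 : Fin q, (μ (X none ⁻¹' {c0})).toReal
        < ∑ _c0 : Fin q, 1/(q:ℝ) :=
      Finset.sum_lt_sum_of_nonempty Finset.univ_nonempty (fun c0 _ => hcon c0)
    rw [hsum1, Finset.sum_const, Finset.card_univ, Fintype.card_fin, nsmul_eq_mul,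
      mul_one_div, div_self (ne_of_gt hq0)] at hlt
    exact lt_irrefl _ hlt
  obtain ⟨c, hcq⟩ := hc
  set P0 : ENNReal := μ (X none ⁻¹' {c}) with hP0def
  set p' : ℝ := P0.toReal with hp'def
  have hp'0 : 0 < p' := lt_of_lt_of_le (by positivity) hcq
  have hmarg : ∀ v, μ (X v ⁻¹' ({c} : Set (Fin q))) = P0 := by
    intro v
    rw [hP0def, ← Measure.map_apply (hmeas v) (measurableSet_singleton c), hid v none,
      Measure.map_apply (hmeas none) (measurableSet_singleton c)]
  have hnull : ∀ u v, (starGraph d).Adj u v →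
      μ (X u ⁻¹' ({c} : Set (Fin q)) ∩ X v ⁻¹' {c}) = 0 := by
    intro u v h
    refine measure_mono_null ?_ (hproper u v h)
    rintro ω ⟨h1, h2⟩
    simp only [Set.mem_preimage, Set.mem_singleton_iff] at h1 h2
    simp only [Set.mem_setOf_eq, h1, h2]
  -- the basic events
  set Aev : Fin d → ℕ → ℕ → Set Ω := fun i k m =>
    ⋂ j ∈ Finset.range m, X (some (i, k+j)) ⁻¹' ({c}ᶜ : Set (Fin q)) with hAev
  have hsplit : ∀ i k m, Aev i k (m+1)
      = X (some (i, k+m)) ⁻¹' ({c}ᶜ : Set (Fin q)) ∩ Aev i k m := by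
    intro i k m
    rw [hAev]
    simp only
    rw [Finset.range_add_one, Finset.set_biInter_insert]
  have hrep : ∀ i k m, Aev i k m
      = ⋂ v ∈ (Finset.range m).image
          (fun j => (some (i, k+j) : Option (Fin d × ℕ))),
          X v ⁻¹' ({c}ᶜ : Set (Fin q)) := by
    intro i k m
    rw [Finset.set_biInter_finset_image, hAev]
  have hU1 : ∀ i k m, μ (Aev i k m ∩ X (some (i, k+m+1)) ⁻¹' ({c} : Set (Fin q)))
      = μ (Aev i k m) * P0 := by
    intro i k m
    have hsep : ∀ a ∈ (Finset.range m).image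
        (fun j => (some (i, k+j) : Option (Fin d × ℕ))),
        ∀ b ∈ ({some (i, k+m+1)} : Finset (Option (Fin d × ℕ))),
        a ≠ b ∧ ¬(starGraph d).Adj a b := by
      intro a ha b hb
      simp only [Finset.mem_image, Finset.mem_range] at ha
      simp only [Finset.mem_singleton] at hb
      obtain ⟨j, hj, rfl⟩ := ha
      subst hb
      constructor
      · simp only [ne_eq, Option.some.injEq, Prod.mk.injEq]
        rintro ⟨-, h2⟩
        omega
      · exact star_not_adj_some i i _ _ (Or.inr ⟨by omega, by omega⟩)
    have h := key_indep hdep _ _ hsep (fun _ => ({c}ᶜ : Set (Fin q))) (fun _ => {c})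
    rw [Finset.set_biInter_singleton] at h
    rw [hrep i k m, h, hmarg]
  have hfin : ∀ s : Set Ω, μ s ≠ ⊤ := fun s => measure_ne_top μ s
  have hrec : ∀ i k m, μ (Aev i k (m+1)) = μ (Aev i k (m+2)) + μ (Aev i k m) * P0 := by
    intro i k m
    set F : Set Ω := X (some (i, k+m+1)) ⁻¹' ({c} : Set (Fin q)) with hF
    have h1 : μ (Aev i k (m+1) ∩ F) + μ (Aev i k (m+1) \ F) = μ (Aev i k (m+1)) :=
      measure_inter_add_diff _ (hCmeas _ c)
    have h2 : Aev i k (m+1) \ F = Aev i k (m+2) := by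
      rw [hsplit i k (m+1), Set.diff_eq, Set.inter_comm]
      rfl
    have h3 : μ (Aev i k (m+1) ∩ F) = μ (Aev i k m ∩ F) := by
      rw [hsplit i k m]
      set G : Set Ω := X (some (i, k+m)) ⁻¹' ({c}ᶜ : Set (Fin q)) with hG
      set A : Set Ω := Aev i k m
      have e1 : G ∩ A ∩ F = (A ∩ F) ∩ G := by
        ext ω; simp only [Set.mem_inter_iff]; tauto
      have e2 : μ ((A ∩ F) ∩ G) + μ ((A ∩ F) \ G) = μ (A ∩ F) :=
        measure_inter_add_diff _ (hmeas _ MeasurableSet.of_discrete)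
      have e3 : μ ((A ∩ F) \ G) = 0 := by
        refine measure_mono_null ?_ (hnull (some (i, k+m)) (some (i, k+m+1))
          (by exact_mod_cast star_adj_step i (k+m)))
        rintro ω ⟨⟨-, hω2⟩, hω3⟩
        rw [hG] at hω3
        simp only [Set.mem_preimage, Set.mem_compl_iff, not_not] at hω3
        exact ⟨hω3, hω2⟩
      rw [e1, ← e2, e3, add_zero]
    rw [← h1, h2, h3, hU1 i k m]
    exact add_comm _ _
  set b : ℕ → ℝ := fun m => (bseq p' m).1 with hb
  have hA : ∀ m, ∀ (k : ℕ) (i : Fin d), (μ (Aev i k m)).toReal = b m := by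
    intro m
    induction m using Nat.strong_induction_on with
    | _ m IH =>
      match m with
      | 0 =>
        intro k i
        have : Aev i k 0 = Set.univ := by rw [hAev]; simp
        rw [this, measure_univ, ENNReal.toReal_one]; rfl
      | 1 =>
        intro k i
        have h0 : Aev i k 1 = (X (some (i, k+0)) ⁻¹' {c})ᶜ := by
          rw [hAev]; simp [Finset.range_one]
        rw [h0, prob_compl_eq_one_sub (hCmeas _ c), hmarg,
          ENNReal.toReal_sub_of_le prob_le_one (by simp), ENNReal.toReal_one]
        rfl
      | (m+2) =>
        intro k i
        have h := congrArg ENNReal.toReal (hrec i k m)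
        rw [ENNReal.toReal_add (hfin _) (ENNReal.mul_ne_top (hfin _) (hfin _)),
          ENNReal.toReal_mul, IH (m+1) (by omega) k i, IH m (by omega) k i] at h
        have hb2 : b (m+2) = b (m+1) - p' * b m := bseq_rec p' m
        have : P0.toReal = p' := rfl
        rw [this] at h
        linarith [h]
  have hbnn : ∀ m, 0 ≤ b m := by
    intro m
    rw [← hA m 0 ⟨0, by omega⟩]
    exact ENNReal.toReal_nonneg
  have hbmono : ∀ m, b (m+1) ≤ b m := by
    intro m
    rw [← hA m 0 ⟨0, by omega⟩, ← hA (m+1) 0 ⟨0, by omega⟩]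
    refine ENNReal.toReal_mono (hfin _) (measure_mono ?_)
    rw [hsplit]
    exact Set.inter_subset_right
  -- independence of the d rays
  have hRays : ∀ (k m : ℕ) (s : Finset (Fin d)),
      μ (⋂ i ∈ s, Aev i k m) = ∏ i ∈ s, μ (Aev i k m) := by
    intro k m s
    induction s using Finset.induction with
    | empty => simp
    | @insert a s' ha IH =>
      rw [Finset.set_biInter_insert, Finset.prod_insert ha, ← IH]
      have hT : (⋂ i ∈ s', Aev i k m)
          = ⋂ v ∈ Finset.image (fun x : Fin d × ℕ => (some (x.1, k + x.2) : Option (Fin d × ℕ)))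
              (s' ×ˢ Finset.range m), X v ⁻¹' ({c}ᶜ : Set (Fin q)) := by
        rw [Finset.set_biInter_finset_image]
        ext ω
        simp only [hAev, Set.mem_iInter, Set.mem_preimage, Set.mem_compl_iff,
          Set.mem_singleton_iff, Finset.mem_product, Finset.mem_range]
        constructor
        · rintro h x ⟨hx1, hx2⟩
          exact h x.1 hx1 x.2 hx2
        · intro h i hi j hj
          exact h (i, j) ⟨hi, hj⟩
      have hsep : ∀ u ∈ (Finset.range m).image
          (fun j => (some (a, k+j) : Option (Fin d × ℕ))),
          ∀ v ∈ Finset.image (fun x : Fin d × ℕ => (some (x.1, k + x.2) : Option (Fin d × ℕ)))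
            (s' ×ˢ Finset.range m),
          u ≠ v ∧ ¬(starGraph d).Adj u v := by
        intro u hu v hv
        simp only [Finset.mem_image, Finset.mem_range, Finset.mem_product] at hu hv
        obtain ⟨j, hj, rfl⟩ := hu
        obtain ⟨x, ⟨hx1, hx2⟩, rfl⟩ := hv
        have hax : a ≠ x.1 := fun hh => ha (hh ▸ hx1)
        constructor
        · simp only [ne_eq, Option.some.injEq, Prod.mk.injEq]
          rintro ⟨h1, -⟩
          exact hax h1
        · exact star_not_adj_some a x.1 _ _ (Or.inl hax)
      have := key_indep hdep _ _ hsep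
        (fun _ => ({c}ᶜ : Set (Fin q))) (fun _ => ({c}ᶜ : Set (Fin q)))
      rw [← hrep a k m, ← hT] at this
      exact this
  -- the star inequality
  have hstar : ∀ m : ℕ, P0 * μ (⋂ i ∈ (Finset.univ : Finset (Fin d)), Aev i 1 m)
      ≤ μ (⋂ i ∈ (Finset.univ : Finset (Fin d)), Aev i 0 (m+1)) := by
    intro m
    set T : Finset (Option (Fin d × ℕ)) :=
      Finset.image (fun x : Fin d × ℕ => (some (x.1, 1 + x.2) : Option (Fin d × ℕ)))
        ((Finset.univ : Finset (Fin d)) ×ˢ Finset.range m) with hTdef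
    have hT : (⋂ i ∈ (Finset.univ : Finset (Fin d)), Aev i 1 m)
        = ⋂ v ∈ T, X v ⁻¹' ({c}ᶜ : Set (Fin q)) := by
      rw [hTdef, Finset.set_biInter_finset_image]
      ext ω
      simp only [hAev, Set.mem_iInter, Set.mem_preimage, Set.mem_compl_iff,
        Set.mem_singleton_iff, Finset.mem_product, Finset.mem_range, Finset.mem_univ]
      constructor
      · rintro h x ⟨-, hx2⟩
        exact h x.1 (by simp) x.2 hx2
      · intro h i _ j hj
        exact h (i, j) ⟨by simp, hj⟩
    have hsep : ∀ u ∈ ({none} : Finset (Option (Fin d × ℕ))), ∀ v ∈ T,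
        u ≠ v ∧ ¬(starGraph d).Adj u v := by
      intro u hu v hv
      simp only [Finset.mem_singleton] at hu
      subst hu
      rw [hTdef] at hv
      simp only [Finset.mem_image, Finset.mem_product, Finset.mem_range] at hv
      obtain ⟨x, -, rfl⟩ := hv
      exact ⟨by simp, star_not_adj_none x.1 _ (by omega)⟩
    have hL := key_indep hdep {none} T hsep (fun _ => ({c} : Set (Fin q)))
      (fun _ => ({c}ᶜ : Set (Fin q)))
    rw [Finset.set_biInter_singleton, ← hT] at hL
    set L : Set Ω := X none ⁻¹' ({c} : Set (Fin q))
      ∩ ⋂ i ∈ (Finset.univ : Finset (Fin d)), Aev i 1 m with hLdef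
    have hLmeas : μ L = P0 * μ (⋂ i ∈ (Finset.univ : Finset (Fin d)), Aev i 1 m) := hL
    set K : Set Ω := ⋂ i : Fin d, X (some (i, 0)) ⁻¹' ({c}ᶜ : Set (Fin q)) with hKdef
    have hKm : MeasurableSet K :=
      MeasurableSet.iInter fun i => hmeas _ MeasurableSet.of_discrete
    have h1 : μ (L ∩ K) + μ (L \ K) = μ L := measure_inter_add_diff L hKm
    have h2 : μ (L \ K) = 0 := by
      refine measure_mono_null ?_ (measure_iUnion_null fun i : Fin d =>
        hnull none (some (i, 0)) (star_adj_root i))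
      rintro ω ⟨⟨hω1, -⟩, hω2⟩
      rw [hKdef] at hω2
      simp only [Set.mem_iInter, Set.mem_preimage, Set.mem_compl_iff,
        Set.mem_singleton_iff, not_forall, not_not] at hω2
      obtain ⟨i, hi⟩ := hω2
      exact Set.mem_iUnion.2 ⟨i, hω1, hi⟩
    have h3 : L ∩ K ⊆ ⋂ i ∈ (Finset.univ : Finset (Fin d)), Aev i 0 (m+1) := by
      rintro ω ⟨⟨-, hω1⟩, hω2⟩
      refine Set.mem_iInter₂.2 fun i _ => ?_
      have hray := Set.mem_iInter₂.1 hω1 i (Finset.mem_univ i)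
      simp only [hAev] at hray
      have hray' := Set.mem_iInter₂.1 hray
      have hzero : X (some (i, 0)) ω ∈ ({c}ᶜ : Set (Fin q)) := Set.mem_iInter.1 hω2 i
      simp only [hAev]
      refine Set.mem_iInter₂.2 fun j hj => ?_
      match j, hj with
      | 0, _ => exact hzero
      | (j'+1), hj =>
        have h5 := hray' j' (Finset.mem_range.2 (by
          have := Finset.mem_range.1 hj; omega))
        have he : (1 : ℕ) + j' = 0 + (j' + 1) := by omega
        rwa [he] at h5
    calc P0 * μ (⋂ i ∈ (Finset.univ : Finset (Fin d)), Aev i 1 m) = μ L := hLmeas.symm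
      _ = μ (L ∩ K) + μ (L \ K) := h1.symm
      _ = μ (L ∩ K) := by rw [h2, add_zero]
      _ ≤ _ := measure_mono h3
  -- convert to the real inequality  p' * b m ^ d ≤ b (m+1) ^ d
  have hprod : ∀ (k m : ℕ), (μ (⋂ i ∈ (Finset.univ : Finset (Fin d)), Aev i k m)).toReal
      = b m ^ d := by
    intro k m
    rw [hRays k m, ENNReal.toReal_prod]
    have : ∀ i ∈ (Finset.univ : Finset (Fin d)), (μ (Aev i k m)).toReal = b m :=
      fun i _ => hA m k i
    rw [Finset.prod_congr rfl this, Finset.prod_const, Finset.card_univ, Fintype.card_fin]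
  have hstar' : ∀ m, p' * b m ^ d ≤ b (m+1) ^ d := by
    intro m
    have h := ENNReal.toReal_mono (hfin _) (hstar m)
    rwa [ENNReal.toReal_mul, hprod 1 m, hprod 0 (m+1)] at h
  -- analysis
  have hdne : d ≠ 0 := by omega
  set t : ℝ := p' ^ ((d:ℝ)⁻¹) with htdef
  have ht0 : 0 < t := Real.rpow_pos_of_pos hp'0 _
  have htpow : t ^ d = p' := Real.rpow_inv_natCast_pow hp'0.le hdne
  have hbt : ∀ m, t * b m ≤ b (m+1) := by
    intro m
    have h1 : (t * b m) ^ d ≤ b (m+1) ^ d := by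
      rw [mul_pow, htpow]; exact hstar' m
    exact (pow_le_pow_iff_left₀ (mul_nonneg ht0.le (hbnn m)) (hbnn (m+1)) hdne).1 h1
  have hbpos : ∀ m, 0 < b m := by
    intro m
    induction m with
    | zero =>
      have h0 : b 0 = 1 := bseq_fst_zero p'
      rw [h0]; norm_num
    | succ m ih => exact lt_of_lt_of_le (by positivity) (hbt m)
  set sR : ℕ → ℝ := fun m => b (m+1) / b m with hsdef
  have hst : ∀ m, t ≤ sR m := fun m => (le_div_iff₀ (hbpos m)).2 (hbt m)
  have hs1 : ∀ m, sR m ≤ 1 := fun m => (div_le_one (hbpos m)).2 (hbmono m)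
  have hsrec : ∀ m, sR (m+1) = 1 - p' / sR m := by
    intro m
    have hbm := (hbpos m).ne'
    have hbm1 := (hbpos (m+1)).ne'
    have hr : b (m+2) = b (m+1) - p' * b m := bseq_rec p' m
    show b (m+2) / b (m+1) = 1 - p' / (b (m+1) / b m)
    rw [hr]
    field_simp
  have hdich : t ≤ 1/2 ∨ t^2 - t + p' ≤ 0 := by
    by_contra hcon
    push_neg at hcon
    obtain ⟨ht2, hQ⟩ := hcon
    set Q : ℝ := t^2 - t + p' with hQdef
    have hstep : ∀ m, sR (m+1) ≤ sR m - Q := by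
      intro m
      have hu0 : 0 < sR m := lt_of_lt_of_le ht0 (hst m)
      have key : (1 - p' / sR m) * sR m ≤ (sR m - Q) * sR m := by
        have e : (1 - p' / sR m) * sR m = sR m - p' := by field_simp
        rw [e]
        nlinarith [hst m, hs1 m, ht2, hQ,
          mul_nonneg (sub_nonneg.2 (hst m)) (by linarith [hst m] : (0:ℝ) ≤ sR m + t - 1),
          mul_nonneg hQ.le (sub_nonneg.2 (hs1 m))]
      have h6 := le_of_mul_le_mul_right key hu0
      rwa [hsrec m]
    have hlin : ∀ m : ℕ, sR m ≤ sR 0 - m * Q := by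
      intro m
      induction m with
      | zero => simp
      | succ m ih =>
        have := hstep m
        push_cast
        push_cast at ih
        linarith
    obtain ⟨m, hm⟩ := exists_nat_gt ((sR 0 - t)/Q)
    rw [div_lt_iff₀ hQ] at hm
    have h7 := hlin m
    have h8 := hst m
    linarith
  set x : ℝ := (1 + Real.sqrt (1 - 4*p))/2 with hxdef
  have hs4 : (0:ℝ) ≤ 1 - 4*p := by linarith
  have hsq : Real.sqrt (1-4*p) ^ 2 = 1 - 4*p := Real.sq_sqrt hs4
  have hx2 : 1/2 ≤ x := by
    have := Real.sqrt_nonneg (1-4*p)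
    rw [hxdef]; linarith
  have hxp : x * (1-x) = p := by
    rw [hxdef]
    linear_combination (-1/4 : ℝ) * hsq
  have hxd : x ^ d = p := heq
  have hx0 : 0 < x := lt_of_lt_of_le (by norm_num) hx2
  have hxd1 : x ^ (d-1) = 1 - x := by
    have h8 : x * x^(d-1) = x * (1-x) := by
      rw [← pow_succ']
      have hd1 : d - 1 + 1 = d := by omega
      rw [hd1, hxd, ← hxp, hxp]
    exact mul_left_cancel₀ hx0.ne' h8
  have htx : t ≤ x := by
    rcases hdich with h | h
    · linarith
    · by_contra hcon
      push_neg at hcon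
      have h9 : x^(d-1) < t^(d-1) := pow_lt_pow_left₀ hcon hx0.le (by omega)
      have ht' : t * t^(d-1) = t^d := by
        rw [← pow_succ']
        congr 1
        omega
      have h10 : t * (t + t^(d-1)) ≤ t * 1 := by
        have h10' : t^2 + t * t^(d-1) ≤ t := by
          rw [ht', htpow]
          linarith
        nlinarith [h10']
      have h11 : t + t^(d-1) ≤ 1 := le_of_mul_le_mul_left h10 ht0
      have h12 : x + x^(d-1) = 1 := by rw [hxd1]; ring
      linarith
  have hp'p : p' ≤ p := by
    calc p' = t^d := htpow.symm
      _ ≤ x^d := pow_le_pow_left₀ ht0.le htx d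
      _ = p := hxd
  have h13 : 1/(q:ℝ) ≤ p := le_trans hcq hp'p
  exact (one_div_le hp0 hq0).2 h13
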